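/- Let (X,d) be a compact Ahlfors regular metric space, let {S_1,...,S_N} be an IFS of contracting similarities on X with similarity dimension s, let C ⊆ X be a nonempty compact set such that the IFS together with C satisfies the condensation open set condition, and let F_C be the inhomogeneous attractor with condensation C. Then for all t ≥ 0, lb-dim F_C ≥ p_t(C)·t + (1 − p_t(C))·s. -/

import Mathlib

open Set Filter Topology Metric MeasureTheory

/-- Minimum number of sets of diameter at most `δ` needed to cover `F`. -/
noncomputable def coverN {X : Type*} [MetricSpace X] (F : Set X) (δ : ℝ) : ℕ :=
  sInf {n : ℕ | ∃ U : Fin n → Set X, (∀ i, EMetric.diam (U i) ≤ ENNReal.ofReal δ) ∧ F ⊆ ⋃ i, U i}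

/-- Lower box dimension. -/
noncomputable def lbDim {X : Type*} [MetricSpace X] (F : Set X) : ℝ :=
  Filter.liminf (fun δ : ℝ => Real.log (coverN F δ) / (-Real.log δ)) (𝓝[>] 0)

/-- Upper box dimension. -/
noncomputable def ubDim {X : Type*} [MetricSpace X] (F : Set X) : ℝ :=
  Filter.limsup (fun δ : ℝ => Real.log (coverN F δ) / (-Real.log δ)) (𝓝[>] 0)

/-- The `(t,δ)`-covering regularity exponent `p_{t,δ}(C)`. -/
noncomputable def cre {X : Type*} [MetricSpace X] (C : Set X) (t δ : ℝ) : ℝ :=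
  sSup {p : ℝ | 0 ≤ p ∧ p ≤ 1 ∧ δ ^ (-(p * t)) ≤ (coverN C (δ ^ p) : ℝ)}

/-- The `t`-covering regularity exponent `p_t(C)`. -/
noncomputable def creT {X : Type*} [MetricSpace X] (C : Set X) (t : ℝ) : ℝ :=
  Filter.liminf (fun δ : ℝ => cre C t δ) (𝓝[>] 0)

section CoverN

variable {X : Type*} [MetricSpace X] {A B : Set X} {ρ ρ' : ℝ}

lemma coverN_le {n : ℕ} (h : ∃ U : Fin n → Set X,
    (∀ i, EMetric.diam (U i) ≤ ENNReal.ofReal ρ) ∧ A ⊆ ⋃ i, U i) : coverN A ρ ≤ n :=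
  Nat.sInf_le h

lemma coverSet_nonempty (hA : IsCompact A) (hρ : 0 < ρ) :
    {n : ℕ | ∃ U : Fin n → Set X, (∀ i, EMetric.diam (U i) ≤ ENNReal.ofReal ρ) ∧
      A ⊆ ⋃ i, U i}.Nonempty := by
  have hcov : A ⊆ ⋃ x ∈ A, Metric.ball x (ρ/2) := fun x hx => by
    exact Set.mem_biUnion hx (Metric.mem_ball_self (half_pos hρ))
  obtain ⟨T, hT⟩ := hA.elim_finite_subcover_image (fun x _ => Metric.isOpen_ball) hcov
  obtain ⟨hTsub, hTfin, hTcov⟩ := hT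
  have : ∃ F : Finset X, A ⊆ ⋃ x ∈ F, Metric.ball x (ρ/2) :=
    ⟨hTfin.toFinset, by simpa only [Set.Finite.mem_toFinset] using hTcov⟩
  obtain ⟨F, hF⟩ := this
  refine ⟨F.card, fun i => Metric.ball (F.equivFin.symm i : X) (ρ/2), fun i => ?_, ?_⟩
  · show EMetric.diam (Metric.ball _ _) ≤ _
    rw [← Metric.emetric_ball]
    refine le_trans EMetric.diam_ball ?_
    rw [← ENNReal.ofReal_ofNat, ← ENNReal.ofReal_mul (by norm_num)]
    exact ENNReal.ofReal_le_ofReal (le_of_eq (by ring))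
  · intro x hx
    obtain ⟨y, hy⟩ := Set.mem_iUnion₂.1 (hF hx)
    exact Set.mem_iUnion.2 ⟨F.equivFin ⟨y, hy.1⟩, by simpa using hy.2⟩

lemma coverN_spec (hA : IsCompact A) (hρ : 0 < ρ) :
    ∃ U : Fin (coverN A ρ) → Set X,
      (∀ i, EMetric.diam (U i) ≤ ENNReal.ofReal ρ) ∧ A ⊆ ⋃ i, U i :=
  Nat.sInf_mem (coverSet_nonempty hA hρ)

lemma one_le_coverN (hA : IsCompact A) (hne : A.Nonempty) (hρ : 0 < ρ) :
    1 ≤ coverN A ρ := by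
  rw [Nat.one_le_iff_ne_zero]
  intro h0
  obtain ⟨U, _, hcov⟩ := coverN_spec hA hρ
  obtain ⟨x, hx⟩ := hne
  obtain ⟨i, -⟩ := Set.mem_iUnion.1 (hcov hx)
  rw [h0] at i
  exact i.elim0

lemma coverN_mono_set (hB : IsCompact B) (hρ : 0 < ρ) (hAB : A ⊆ B) :
    coverN A ρ ≤ coverN B ρ := by
  obtain ⟨U, hU, hcov⟩ := coverN_spec hB hρ
  exact coverN_le ⟨U, hU, hAB.trans hcov⟩

lemma coverN_anti (hA : IsCompact A) (hρ : 0 < ρ) (hρρ' : ρ ≤ ρ') :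
    coverN A ρ' ≤ coverN A ρ := by
  obtain ⟨U, hU, hcov⟩ := coverN_spec hA hρ
  exact coverN_le ⟨U, fun i => (hU i).trans (ENNReal.ofReal_le_ofReal hρρ'), hcov⟩

lemma coverN_le_card {m : ℕ} {G : Finset (Fin m)} {T : Fin m → Set X}
    (hd : ∀ k ∈ G, EMetric.diam (T k) ≤ ENNReal.ofReal ρ)
    (hc : A ⊆ ⋃ k ∈ G, T k) : coverN A ρ ≤ G.card := by
  refine coverN_le ⟨fun i => T (G.equivFin.symm i : Fin m), fun i => hd _ (G.equivFin.symm i).2, ?_⟩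
  intro x hx
  obtain ⟨k, hk, hxk⟩ := Set.mem_iUnion₂.1 (hc hx)
  refine Set.mem_iUnion.2 ⟨G.equivFin ⟨k, hk⟩, ?_⟩
  simpa using hxk

end CoverN

section Words

set_option linter.unusedSectionVars false
variable {N : ℕ} {X : Type*} [MetricSpace X]

/-- product of ratios along a word -/
def wordProd (r : Fin N → ℝ) : List (Fin N) → ℝ := fun w => (w.map r).prod

/-- composition of maps along a word -/
def wordMap (S : Fin N → X → X) : List (Fin N) → X → X :=
  fun w => w.foldr (fun i f => S i ∘ f) id

@[simp] lemma wordProd_nil (r : Fin N → ℝ) : wordProd r [] = 1 := rfl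
@[simp] lemma wordProd_cons (r : Fin N → ℝ) (i : Fin N) (w : List (Fin N)) :
    wordProd r (i :: w) = r i * wordProd r w := by simp [wordProd]
@[simp] lemma wordMap_nil (S : Fin N → X → X) : wordMap S [] = id := rfl
@[simp] lemma wordMap_cons (S : Fin N → X → X) (i : Fin N) (w : List (Fin N)) :
    wordMap S (i :: w) = S i ∘ wordMap S w := rfl

variable {r : Fin N → ℝ} {S : Fin N → X → X}

lemma wordProd_pos (hr : ∀ i, r i ∈ Set.Ioo (0:ℝ) 1) (w : List (Fin N)) :
    0 < wordProd r w := by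
  induction w with
  | nil => norm_num
  | cons i w ih => simpa using mul_pos (hr i).1 ih

lemma wordProd_le_one (hr : ∀ i, r i ∈ Set.Ioo (0:ℝ) 1) (w : List (Fin N)) :
    wordProd r w ≤ 1 := by
  induction w with
  | nil => simp
  | cons i w ih =>
    simp only [wordProd_cons]
    calc r i * wordProd r w ≤ 1 * 1 :=
      mul_le_mul (hr i).2.le ih (wordProd_pos hr w).le one_pos.le
    _ = 1 := by ring

lemma wordMap_dist (hS : ∀ i x y, dist (S i x) (S i y) = r i * dist x y)
    (w : List (Fin N)) (x y : X) :
    dist (wordMap S w x) (wordMap S w y) = wordProd r w * dist x y := by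
  induction w with
  | nil => simp
  | cons i w ih => simp [hS, ih, mul_assoc]

lemma wordMap_image_subset {U : Set X} (hU : (⋃ i, S i '' U) ⊆ U) (w : List (Fin N)) :
    wordMap S w '' U ⊆ U := by
  induction w with
  | nil => simp
  | cons i w ih =>
    rw [wordMap_cons, Set.image_comp]
    exact (Set.image_mono ih).trans ((Set.subset_iUnion (fun j => S j '' U) i).trans hU)

lemma wordMap_image_subset_FC {FC C : Set X} (hsub : ∀ i, S i '' FC ⊆ FC) (hCsub : C ⊆ FC)
    (w : List (Fin N)) : wordMap S w '' C ⊆ FC := by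
  induction w with
  | nil => simpa
  | cons i w ih =>
    rw [wordMap_cons, Set.image_comp]
    exact (Set.image_mono ih).trans (hsub i)

open Classical in
/-- stopping-time cut set of the tree of words at scale `θ`, with recursion fuel -/
noncomputable def cut (r : Fin N → ℝ) : ℕ → ℝ → Finset (List (Fin N))
  | 0, θ => if 1 ≤ θ then {[]} else ∅
  | (fuel+1), θ => if 1 ≤ θ then {[]} else
      Finset.univ.biUnion fun i => (cut r fuel (θ / r i)).image (i :: ·)

lemma cut_of_one_le {θ : ℝ} (h : 1 ≤ θ) (fuel : ℕ) : cut r fuel θ = {[]} := by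
  cases fuel <;> simp [cut, h]

lemma cut_zero_of_lt {θ : ℝ} (h : ¬ (1 ≤ θ)) : cut r 0 θ = ∅ := by simp [cut, h]

lemma cut_succ_of_lt {θ : ℝ} (h : ¬ (1 ≤ θ)) (fuel : ℕ) :
    cut r (fuel+1) θ = Finset.univ.biUnion fun i => (cut r fuel (θ / r i)).image (i :: ·) := by
  simp [cut, h]

lemma cut_sum (hN : 0 < N) (hr : ∀ i, r i ∈ Set.Ioo (0:ℝ) 1) {R s : ℝ}
    (hR : ∀ i, r i ≤ R) (hs : ∑ i, r i ^ s = 1) :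
    ∀ (fuel : ℕ) (θ : ℝ), 0 < θ → R ^ fuel < θ →
      ∑ w ∈ cut r fuel θ, (wordProd r w) ^ s = 1 := by
  intro fuel
  induction fuel with
  | zero =>
    intro θ hθ hfuel
    rw [cut_of_one_le (le_of_lt (by simpa using hfuel))]
    simp
  | succ fuel ih =>
    intro θ hθ hfuel
    by_cases h1 : 1 ≤ θ
    · rw [cut_of_one_le h1]; simp
    · rw [cut_succ_of_lt h1]
      rw [Finset.sum_biUnion]
      · have : ∀ i : Fin N, ∑ w ∈ (cut r fuel (θ / r i)).image (i :: ·), (wordProd r w) ^ s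
            = r i ^ s * ∑ w ∈ cut r fuel (θ / r i), (wordProd r w) ^ s := by
          intro i
          rw [Finset.sum_image (by intro a _ b _ h; simpa using h), Finset.mul_sum]
          refine Finset.sum_congr rfl fun w hw => ?_
          rw [wordProd_cons, Real.mul_rpow (hr i).1.le (wordProd_pos hr w).le]
        rw [Finset.sum_congr rfl fun i _ => this i]
        have hih : ∀ i : Fin N, ∑ w ∈ cut r fuel (θ / r i), (wordProd r w) ^ s = 1 := by
          intro i
          refine ih (θ / r i) (div_pos hθ (hr i).1) ?_
          rw [lt_div_iff₀ (hr i).1]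
          calc R ^ fuel * r i ≤ R ^ fuel * R := by
                have hR0 : 0 ≤ R := le_trans (hr ⟨0, hN⟩).1.le (hR ⟨0, hN⟩)
                exact mul_le_mul_of_nonneg_left (hR _) (pow_nonneg hR0 _)
          _ = R ^ (fuel+1) := by ring
          _ < θ := hfuel
        simp only [fun i : Fin N => hih i, mul_one]
        exact hs
      · intro i _ j _ hij
        apply Finset.disjoint_left.2
        intro w hwi hwj
        simp only [Finset.mem_image] at hwi hwj
        obtain ⟨a, _, ha⟩ := hwi
        obtain ⟨b, _, hb⟩ := hwj
        exact hij (by rw [← ha] at hb; exact (List.cons.injEq _ _ _ _ ▸ hb).1.symm ▸ rfl)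

lemma cut_mem_le (hr : ∀ i, r i ∈ Set.Ioo (0:ℝ) 1) :
    ∀ (fuel : ℕ) (θ : ℝ) (w : List (Fin N)), 0 < θ → w ∈ cut r fuel θ →
      wordProd r w ≤ θ ∨ (w = [] ∧ 1 ≤ θ) := by
  intro fuel
  induction fuel with
  | zero =>
    intro θ w hθ hw
    by_cases h1 : 1 ≤ θ
    · rw [cut_of_one_le h1] at hw
      right
      exact ⟨by simpa using hw, h1⟩
    · rw [cut_zero_of_lt h1] at hw; simp at hw
  | succ fuel ih =>
    intro θ w hθ hw
    by_cases h1 : 1 ≤ θ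
    · rw [cut_of_one_le h1] at hw
      right
      exact ⟨by simpa using hw, h1⟩
    · rw [cut_succ_of_lt h1] at hw
      simp only [Finset.mem_biUnion, Finset.mem_image] at hw
      obtain ⟨i, -, u, hu, rfl⟩ := hw
      left
      rcases ih (θ / r i) u (div_pos hθ (hr i).1) hu with h | ⟨rfl, h⟩
      · rw [wordProd_cons]
        calc r i * wordProd r u ≤ r i * (θ / r i) :=
          mul_le_mul_of_nonneg_left h (hr i).1.le
        _ = θ := by rw [mul_div_cancel₀ _ (ne_of_gt (hr i).1)]
      · rw [le_div_iff₀ (hr i).1, one_mul] at h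
        simpa using h

lemma cut_mem_ge (hr : ∀ i, r i ∈ Set.Ioo (0:ℝ) 1) {m : ℝ} (hm : 0 < m)
    (hmr : ∀ i, m ≤ r i) :
    ∀ (fuel : ℕ) (θ : ℝ) (w : List (Fin N)), 0 < θ → w ∈ cut r fuel θ →
      min (m * θ) 1 ≤ wordProd r w := by
  intro fuel
  induction fuel with
  | zero =>
    intro θ w hθ hw
    by_cases h1 : 1 ≤ θ
    · rw [cut_of_one_le h1] at hw
      have : w = [] := by simpa using hw
      subst this
      simpa using min_le_right _ 1
    · rw [cut_zero_of_lt h1] at hw; simp at hw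
  | succ fuel ih =>
    intro θ w hθ hw
    by_cases h1 : 1 ≤ θ
    · rw [cut_of_one_le h1] at hw
      have : w = [] := by simpa using hw
      subst this
      simpa using min_le_right _ 1
    · rw [cut_succ_of_lt h1] at hw
      simp only [Finset.mem_biUnion, Finset.mem_image] at hw
      obtain ⟨i, -, u, hu, rfl⟩ := hw
      have hiu := ih (θ / r i) u (div_pos hθ (hr i).1) hu
      rw [wordProd_cons]
      rcases min_cases (m * (θ / r i)) 1 with ⟨he, -⟩ | ⟨he, hle⟩
      · rw [he] at hiu
        refine le_trans (min_le_left _ _) ?_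
        calc m * θ = r i * (m * (θ / r i)) := by
              rw [mul_comm (r i), mul_assoc, div_mul_cancel₀ _ (ne_of_gt (hr i).1)]
        _ ≤ r i * wordProd r u := mul_le_mul_of_nonneg_left hiu (hr i).1.le
      · rw [he] at hiu
        -- wordProd r u ≥ 1, so r i * wordProd r u ≥ r i ≥ m ≥ min (m*θ) 1
        have : m ≤ r i * wordProd r u := by
          calc m = m * 1 := (mul_one m).symm
          _ ≤ r i * wordProd r u := mul_le_mul (hmr i) hiu one_pos.le (hr i).1.le
        refine le_trans (min_le_left _ _) (le_trans ?_ this)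
        calc m * θ ≤ m * 1 := mul_le_mul_of_nonneg_left (le_of_not_ge h1) hm.le
        _ = m := mul_one m

lemma cut_pairwise_disjoint {U : Set X}
    (hr : ∀ i, r i ∈ Set.Ioo (0:ℝ) 1)
    (hS : ∀ i x y, dist (S i x) (S i y) = r i * dist x y)
    (hU : (⋃ i, S i '' U) ⊆ U)
    (hdisj : Pairwise fun i j => Disjoint (S i '' U) (S j '' U)) :
    ∀ (fuel : ℕ) (θ : ℝ) (w w' : List (Fin N)), w ∈ cut r fuel θ → w' ∈ cut r fuel θ →
      w ≠ w' → Disjoint (wordMap S w '' U) (wordMap S w' '' U) := by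
  have hinj : ∀ i : Fin N, Function.Injective (S i) := by
    intro i x y hxy
    have := hS i x y
    rw [hxy] at this
    have h0 : r i * dist x y = 0 := by simpa using this.symm
    have := (mul_eq_zero.1 h0).resolve_left (ne_of_gt (hr i).1)
    exact dist_eq_zero.1 this
  intro fuel
  induction fuel with
  | zero =>
    intro θ w w' hw hw' hne
    by_cases h1 : 1 ≤ θ
    · rw [cut_of_one_le h1] at hw hw'
      have e1 : w = [] := by simpa using hw
      have e2 : w' = [] := by simpa using hw'
      exact absurd (e1.trans e2.symm) hne
    · rw [cut_zero_of_lt h1] at hw; simp at hw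
  | succ fuel ih =>
    intro θ w w' hw hw' hne
    by_cases h1 : 1 ≤ θ
    · rw [cut_of_one_le h1] at hw hw'
      have e1 : w = [] := by simpa using hw
      have e2 : w' = [] := by simpa using hw'
      exact absurd (e1.trans e2.symm) hne
    · rw [cut_succ_of_lt h1] at hw hw'
      simp only [Finset.mem_biUnion, Finset.mem_image] at hw hw'
      obtain ⟨i, -, a, ha, rfl⟩ := hw
      obtain ⟨j, -, b, hb, rfl⟩ := hw'
      by_cases hij : i = j
      · subst hij
        have hab : a ≠ b := fun h => hne (by rw [h])
        have hd := ih (θ / r i) a b ha hb hab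
        rw [wordMap_cons, wordMap_cons, Set.image_comp, Set.image_comp]
        exact (Set.disjoint_image_iff (hinj i)).2 hd
      · rw [wordMap_cons, wordMap_cons, Set.image_comp, Set.image_comp]
        refine Set.disjoint_of_subset ?_ ?_ (hdisj hij)
        · exact Set.image_mono (wordMap_image_subset hU a)
        · exact Set.image_mono (wordMap_image_subset hU b)

lemma cut_card (hN : 0 < N) (hr : ∀ i, r i ∈ Set.Ioo (0:ℝ) 1) {R s : ℝ}
    (hR : ∀ i, r i ≤ R) (hsum : ∑ i, r i ^ s = 1) (hs : 0 ≤ s)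
    {fuel : ℕ} {θ : ℝ} (hθ : 0 < θ) (hfuel : R ^ fuel < θ) :
    θ ^ (-s) ≤ ((cut r fuel θ).card : ℝ) := by
  by_cases h1 : 1 ≤ θ
  · rw [cut_of_one_le h1]
    simp only [Finset.card_singleton, Nat.cast_one]
    exact Real.rpow_le_one_of_one_le_of_nonpos h1 (neg_nonpos.2 hs)
  · have hsum1 := cut_sum hN hr hR hsum fuel θ hθ hfuel
    have hbound : ∀ w ∈ cut r fuel θ, (wordProd r w) ^ s ≤ θ ^ s := by
      intro w hw
      rcases cut_mem_le hr fuel θ w hθ hw with h | ⟨-, h⟩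
      · exact Real.rpow_le_rpow (wordProd_pos hr w).le h hs
      · exact absurd h h1
    have := Finset.sum_le_sum hbound
    rw [hsum1] at this
    have hcard : (1:ℝ) ≤ ((cut r fuel θ).card : ℝ) * θ ^ s := by
      calc (1:ℝ) ≤ ∑ _w ∈ cut r fuel θ, θ ^ s := this
      _ = ((cut r fuel θ).card : ℝ) * θ ^ s := by rw [Finset.sum_const, nsmul_eq_mul]
    rw [Real.rpow_neg hθ.le]
    rw [inv_le_iff_one_le_mul₀ (Real.rpow_pos_of_pos hθ _)]
    linarith [hcard]

end Words

section Liminf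

lemma le_liminf_aux {f : ℝ → ℝ} {l : Filter ℝ} [l.NeBot] {b B : ℝ}
    (hB : ∀ᶠ δ in l, f δ ≤ B) (hb : ∀ᶠ δ in l, b ≤ f δ) : b ≤ Filter.liminf f l := by
  rw [Filter.liminf_eq]
  refine le_csSup ⟨B, fun a ha => ?_⟩ hb
  obtain ⟨δ, h1, h2⟩ := (ha.and hB).exists
  exact h1.trans h2

end Liminf

section Measure

variable {X : Type*} [MetricSpace X] [MeasurableSpace X] [BorelSpace X]

lemma hausdorff_image_ge [Nonempty X] {f : X → X} {c d : ℝ} (hc : 0 < c) (hd : 0 ≤ d)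
    (hf : ∀ x y, dist (f x) (f y) = c * dist x y) (A : Set X) :
    ENNReal.ofReal (c ^ d) * μH[d] A ≤ μH[d] (f '' A) := by
  classical
  set g : X → X := fun y => if h : ∃ x ∈ A, f x = y then h.choose else Classical.arbitrary X
    with hg
  have hginv : ∀ y ∈ f '' A, g y ∈ A ∧ f (g y) = y := by
    intro y hy
    obtain ⟨x, hx, rfl⟩ := hy
    have h : ∃ x' ∈ A, f x' = f x := ⟨x, hx, rfl⟩
    have hgeq : g (f x) = h.choose := by
      simp only [hg]
      rw [dif_pos h]
    rw [hgeq]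
    exact ⟨h.choose_spec.1, h.choose_spec.2⟩
  have hgim : g '' (f '' A) = A := by
    apply Set.Subset.antisymm
    · rintro _ ⟨y, hy, rfl⟩
      exact (hginv y hy).1
    · intro x hx
      have hy : f x ∈ f '' A := ⟨x, hx, rfl⟩
      obtain ⟨hgA, hfg⟩ := hginv (f x) hy
      have : g (f x) = x := by
        have := hf (g (f x)) x
        rw [hfg] at this
        have h0 : c * dist (g (f x)) x = 0 := by simpa using this.symm
        exact dist_eq_zero.1 ((mul_eq_zero.1 h0).resolve_left (ne_of_gt hc))
      exact ⟨f x, hy, this⟩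
  have hlip : LipschitzOnWith (c⁻¹).toNNReal g (f '' A) := by
    apply LipschitzOnWith.of_dist_le_mul
    intro y hy y' hy'
    have h1 := hf (g y) (g y')
    rw [(hginv y hy).2, (hginv y' hy').2] at h1
    have : dist (g y) (g y') = c⁻¹ * dist y y' := by
      rw [h1, ← mul_assoc, inv_mul_cancel₀ (ne_of_gt hc), one_mul]
    rw [this, Real.coe_toNNReal _ (inv_nonneg.2 hc.le)]
  have hmeas := hlip.hausdorffMeasure_image_le hd
  rw [hgim] at hmeas
  calc ENNReal.ofReal (c ^ d) * μH[d] A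
      ≤ ENNReal.ofReal (c ^ d) * ((c⁻¹).toNNReal ^ d * μH[d] (f '' A)) := by
        exact mul_le_mul_right hmeas _
  _ = (ENNReal.ofReal (c ^ d) * (c⁻¹).toNNReal ^ d) * μH[d] (f '' A) := (mul_assoc _ _ _).symm
  _ = 1 * μH[d] (f '' A) := by
        congr 1
        have h1 : ((c⁻¹).toNNReal : ENNReal) = ENNReal.ofReal c⁻¹ := rfl
        rw [h1, ← ENNReal.ofReal_rpow_of_pos hc,
          ← ENNReal.mul_rpow_of_ne_top ENNReal.ofReal_ne_top ENNReal.ofReal_ne_top,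
          ← ENNReal.ofReal_mul hc.le, mul_inv_cancel₀ (ne_of_gt hc)]
        simp
  _ = μH[d] (f '' A) := one_mul _

lemma measure_univ_finite [CompactSpace X] {dH lam : ℝ} (hlam : 0 < lam)
    (hD : 0 < Metric.diam (Set.univ : Set X))
    (hreg : ∀ (x : X) (ρ : ℝ), 0 < ρ → ρ ≤ Metric.diam (Set.univ : Set X) →
      μH[dH] (Metric.ball x ρ) ≤ ENNReal.ofReal (lam * ρ ^ dH)) :
    μH[dH] (Set.univ : Set X) ≠ ⊤ := by
  set D := Metric.diam (Set.univ : Set X)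
  have hcov : (Set.univ : Set X) ⊆ ⋃ x : X, Metric.ball x D := fun x _ =>
    Set.mem_iUnion.2 ⟨x, Metric.mem_ball_self hD⟩
  obtain ⟨F, hF⟩ := isCompact_univ.elim_finite_subcover (fun x : X => Metric.ball x D)
    (fun _ => Metric.isOpen_ball) hcov
  have : μH[dH] (Set.univ : Set X) ≤ ∑ x ∈ F, μH[dH] (Metric.ball x D) :=
    le_trans (measure_mono hF) (measure_biUnion_finset_le F _)
  refine ne_top_of_le_ne_top ?_ this
  refine ne_of_lt (lt_of_le_of_lt (Finset.sum_le_sum fun x _ => hreg x D hD le_rfl) ?_)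
  exact lt_of_le_of_lt (le_of_eq (Finset.sum_const _)) (by
    simp only [nsmul_eq_mul]
    exact ENNReal.mul_lt_top (ENNReal.natCast_lt_top _) ENNReal.ofReal_lt_top)

end Measure

section Upper

variable {X : Type*} [MetricSpace X] [MeasurableSpace X] [BorelSpace X]

lemma coverN_univ_le [CompactSpace X] {dH lam : ℝ} (hdH : 0 ≤ dH) (hlam : 0 < lam)
    (hD : 0 < Metric.diam (Set.univ : Set X))
    (hregl : ∀ (x : X) (ρ : ℝ), 0 < ρ → ρ ≤ Metric.diam (Set.univ : Set X) →
      ENNReal.ofReal (lam⁻¹ * ρ ^ dH) ≤ μH[dH] (Metric.ball x ρ))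
    (hregu : ∀ (x : X) (ρ : ℝ), 0 < ρ → ρ ≤ Metric.diam (Set.univ : Set X) →
      μH[dH] (Metric.ball x ρ) ≤ ENNReal.ofReal (lam * ρ ^ dH)) :
    ∃ CX : ℝ, 0 < CX ∧ ∀ δ : ℝ, 0 < δ → δ ≤ Metric.diam (Set.univ : Set X) →
      (coverN (Set.univ : Set X) δ : ℝ) ≤ CX * δ ^ (-dH) := by
  classical
  set D := Metric.diam (Set.univ : Set X) with hDdef
  set μ : MeasureTheory.Measure X := μH[dH]
  have hVfin : μ (Set.univ : Set X) ≠ ⊤ := measure_univ_finite hlam hD hregu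
  set Vr : ℝ := (μ (Set.univ : Set X)).toReal with hVr
  have hVr0 : 0 ≤ Vr := ENNReal.toReal_nonneg
  refine ⟨max 1 (Vr * lam * 8 ^ dH), lt_of_lt_of_le one_pos (le_max_left _ _), ?_⟩
  intro δ hδ0 hδD
  -- separated sets have bounded cardinality
  have hsep_card : ∀ F : Finset X, (∀ x ∈ F, ∀ y ∈ F, x ≠ y → δ/2 ≤ dist x y) →
      (F.card : ℝ) * (lam⁻¹ * (δ/8) ^ dH) ≤ Vr := by
    intro F hF
    have hdisj : (↑F : Set X).PairwiseDisjoint (fun x => Metric.ball x (δ/8)) := by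
      intro x hx y hy hxy
      apply Set.disjoint_left.2
      intro z hzx hzy
      have : dist x y < δ/2 := by
        calc dist x y ≤ dist x z + dist z y := dist_triangle _ _ _
        _ < δ/8 + δ/8 := by
            rw [Metric.mem_ball] at hzx hzy
            rw [dist_comm x z]
            exact add_lt_add hzx hzy
        _ ≤ δ/2 := by linarith
      exact absurd (hF x hx y hy hxy) (not_le.2 this)
    have hmeasb : ∀ x ∈ F, MeasurableSet (Metric.ball x (δ/8)) :=
      fun x _ => Metric.isOpen_ball.measurableSet
    have hle : (F.card : ℕ) • ENNReal.ofReal (lam⁻¹ * (δ/8) ^ dH) ≤ μ (Set.univ : Set X) := by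
      calc (F.card : ℕ) • ENNReal.ofReal (lam⁻¹ * (δ/8) ^ dH)
          ≤ ∑ x ∈ F, μ (Metric.ball x (δ/8)) := by
            refine Finset.card_nsmul_le_sum F _ _ fun x _ => ?_
            exact hregl x (δ/8) (by linarith) (by linarith)
      _ = μ (⋃ x ∈ F, Metric.ball x (δ/8)) := (measure_biUnion_finset hdisj hmeasb).symm
      _ ≤ μ Set.univ := measure_mono (Set.subset_univ _)
    have h2 : ((F.card : ℕ) • ENNReal.ofReal (lam⁻¹ * (δ/8) ^ dH)).toReal
        = (F.card : ℝ) * (lam⁻¹ * (δ/8) ^ dH) := by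
      rw [nsmul_eq_mul, ENNReal.toReal_mul, ENNReal.toReal_natCast,
        ENNReal.toReal_ofReal (by positivity)]
    calc (F.card : ℝ) * (lam⁻¹ * (δ/8) ^ dH) = _ := h2.symm
    _ ≤ (μ (Set.univ : Set X)).toReal := by
        apply ENNReal.toReal_mono hVfin
        exact hle
    _ = Vr := rfl
  -- the set of cardinalities of separated sets is bounded
  set Sep : Set (Finset X) := {F | ∀ x ∈ F, ∀ y ∈ F, x ≠ y → δ/2 ≤ dist x y} with hSep
  have hpos8 : (0:ℝ) < lam⁻¹ * (δ/8) ^ dH := by positivity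
  have hcards_bdd : BddAbove (Finset.card '' Sep) := by
    refine ⟨⌊Vr / (lam⁻¹ * (δ/8) ^ dH)⌋₊, ?_⟩
    rintro n ⟨F, hF, rfl⟩
    refine Nat.le_floor ?_
    rw [le_div_iff₀ hpos8]
    exact hsep_card F hF
  have hcards_ne : (Finset.card '' Sep).Nonempty := ⟨0, ∅, by simp [hSep], rfl⟩
  obtain ⟨F, hFsep, hFcard⟩ := Nat.sSup_mem hcards_ne hcards_bdd
  -- maximality gives covering
  have hcover : ∀ x : X, ∃ e ∈ F, dist x e < δ/2 := by
    intro x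
    by_contra hcon
    push_neg at hcon
    have hxF : x ∉ F := fun hx => absurd (dist_self x ▸ hcon x hx) (by simp; linarith)
    have hins : insert x F ∈ Sep := by
      intro a ha b hb hab
      rcases Finset.mem_insert.1 ha with rfl | ha' <;>
        rcases Finset.mem_insert.1 hb with rfl | hb'
      · exact absurd rfl hab
      · exact hcon b hb'
      · rw [dist_comm]; exact hcon a ha'
      · exact hFsep a ha' b hb' hab
    have : (insert x F).card ≤ sSup (Finset.card '' Sep) :=
      le_csSup hcards_bdd ⟨_, hins, rfl⟩
    rw [Finset.card_insert_of_notMem hxF, hFcard] at this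
    omega
  have hcovN : coverN (Set.univ : Set X) δ ≤ F.card := by
    refine coverN_le ⟨fun i => Metric.ball (F.equivFin.symm i : X) (δ/2), fun i => ?_, ?_⟩
    · show EMetric.diam (Metric.ball _ _) ≤ _
      rw [← Metric.emetric_ball]
      refine le_trans EMetric.diam_ball ?_
      rw [← ENNReal.ofReal_ofNat, ← ENNReal.ofReal_mul (by norm_num)]
      exact ENNReal.ofReal_le_ofReal (le_of_eq (by ring))
    · intro x _
      obtain ⟨e, he, hde⟩ := hcover x
      exact Set.mem_iUnion.2 ⟨F.equivFin ⟨e, he⟩, by simpa [Metric.mem_ball] using hde⟩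
  -- conclude
  have hFR : (F.card : ℝ) ≤ Vr * lam * 8 ^ dH * δ ^ (-dH) := by
    have h := hsep_card F hFsep
    rw [← le_div_iff₀ hpos8] at h
    refine h.trans (le_of_eq ?_)
    rw [Real.div_rpow (by linarith) (by norm_num), Real.rpow_neg hδ0.le]
    field_simp
  calc (coverN (Set.univ : Set X) δ : ℝ) ≤ (F.card : ℝ) := Nat.cast_le.2 hcovN
  _ ≤ Vr * lam * 8 ^ dH * δ ^ (-dH) := hFR
  _ ≤ max 1 (Vr * lam * 8 ^ dH) * δ ^ (-dH) := by
      have := Real.rpow_pos_of_pos hδ0 (-dH)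
      exact mul_le_mul_of_nonneg_right (le_max_right _ _) this.le

end Upper

section MainCount

variable {X : Type*} [MetricSpace X] [CompactSpace X] [MeasurableSpace X] [BorelSpace X]

set_option maxHeartbeats 2000000 in
lemma main_count {N : ℕ} (hN : 0 < N) (S : Fin N → X → X) (r : Fin N → ℝ)
    (hr : ∀ i, r i ∈ Set.Ioo (0 : ℝ) 1)
    (hS : ∀ i x y, dist (S i x) (S i y) = r i * dist x y)
    {s : ℝ} (hsum : ∑ i, r i ^ s = 1) (hs0 : 0 ≤ s)
    (dH lam : ℝ) (hdH : 0 ≤ dH) (hlam : 0 < lam)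
    (hreg : ∀ (x : X) (ρ : ℝ), 0 < ρ → ρ ≤ Metric.diam (Set.univ : Set X) →
      ENNReal.ofReal (lam⁻¹ * ρ ^ dH) ≤ μH[dH] (Metric.ball x ρ) ∧
      μH[dH] (Metric.ball x ρ) ≤ ENNReal.ofReal (lam * ρ ^ dH))
    (hD : 0 < Metric.diam (Set.univ : Set X))
    (C FC U : Set X) (hC : IsCompact C) (hCne : C.Nonempty)
    (hFCc : IsCompact FC) (hFC : FC = (⋃ i, S i '' FC) ∪ C)
    (hUopen : IsOpen U) (hUne : U.Nonempty)
    (hUsub : (⋃ i, S i '' U) ⊆ U)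
    (hUdisj : Pairwise fun i j => Disjoint (S i '' U) (S j '' U))
    (t : ℝ) (ht : 0 ≤ t) :
    ∃ c : ℝ, 0 < c ∧ ∀ δ p' : ℝ, 0 < δ → δ < 1 → 0 ≤ p' → p' ≤ 1 →
      δ ^ (-(p' * t)) ≤ (coverN C (δ ^ p') : ℝ) →
      c * δ ^ (-((1-p')*s + p'*t)) ≤ (coverN FC δ : ℝ) := by
  classical
  have hXne : Nonempty X := ⟨hCne.some⟩
  set D := Metric.diam (Set.univ : Set X) with hDdef
  set μ : MeasureTheory.Measure X := μH[dH] with hμ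
  -- min and max contraction ratios
  have hNE : (Finset.univ : Finset (Fin N)).Nonempty := ⟨⟨0, hN⟩, Finset.mem_univ _⟩
  set rmin : ℝ := Finset.univ.inf' hNE r with hrmin
  set rmax : ℝ := Finset.univ.sup' hNE r with hrmax
  have hrmin_mem : ∃ i, rmin = r i := by
    obtain ⟨i, _, hi⟩ := Finset.exists_mem_eq_inf' hNE r
    exact ⟨i, hi⟩
  have hrmax_mem : ∃ i, rmax = r i := by
    obtain ⟨i, _, hi⟩ := Finset.exists_mem_eq_sup' hNE r
    exact ⟨i, hi⟩
  have hrmin_pos : 0 < rmin := by obtain ⟨i, hi⟩ := hrmin_mem; rw [hi]; exact (hr i).1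
  have hrmin_lt1 : rmin < 1 := by obtain ⟨i, hi⟩ := hrmin_mem; rw [hi]; exact (hr i).2
  have hrmax_lt1 : rmax < 1 := by obtain ⟨i, hi⟩ := hrmax_mem; rw [hi]; exact (hr i).2
  have hrmax_pos : 0 < rmax := by obtain ⟨i, hi⟩ := hrmax_mem; rw [hi]; exact (hr i).1
  have hrmin_le : ∀ i, rmin ≤ r i := fun i => Finset.inf'_le r (Finset.mem_univ i)
  have hrle_max : ∀ i, r i ≤ rmax := fun i => Finset.le_sup' r (Finset.mem_univ i)
  -- point and ball inside U
  obtain ⟨u, hu⟩ := hUne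
  obtain ⟨η₀, hη₀pos, hball⟩ := Metric.isOpen_iff.1 hUopen u hu
  set η : ℝ := min η₀ D with hη
  have hηpos : 0 < η := lt_min hη₀pos hD
  have hηD : η ≤ D := min_le_right _ _
  set KU : Set X := Metric.closedBall u (η/2) with hKU
  have hKUco : IsCompact KU := isCompact_of_isClosed_isBounded Metric.isClosed_closedBall
    Metric.isBounded_closedBall
  have hKUU : KU ⊆ U := by
    refine le_trans ?_ hball
    intro z hz
    rw [Metric.mem_closedBall] at hz
    rw [Metric.mem_ball]
    calc dist z u ≤ η/2 := hz
    _ < η := by linarith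
    _ ≤ η₀ := min_le_left _ _
  have hμKU : ENNReal.ofReal (lam⁻¹ * (η/2) ^ dH) ≤ μ KU := by
    refine le_trans ((hreg u (η/2) (by linarith) (by linarith)).1) (measure_mono ?_)
    exact Metric.ball_subset_closedBall
  -- global upper bound for measures of balls
  have hVfin : μ (Set.univ : Set X) ≠ ⊤ :=
    measure_univ_finite hlam hD (fun x ρ h1 h2 => (hreg x ρ h1 h2).2)
  set Vr : ℝ := (μ (Set.univ : Set X)).toReal with hVr
  have hVr0 : 0 ≤ Vr := ENNReal.toReal_nonneg
  set Lbar : ℝ := lam + Vr / D ^ dH with hLbar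
  have hLbar_pos : 0 < Lbar := by positivity
  have hUB : ∀ (z : X) (R : ℝ), 0 < R → μ (Metric.ball z R) ≤ ENNReal.ofReal (Lbar * R ^ dH) := by
    intro z R hR
    have hRdH : (0:ℝ) < R ^ dH := Real.rpow_pos_of_pos hR _
    rcases le_or_gt R D with hRD | hRD
    · refine le_trans ((hreg z R hR hRD).2) (ENNReal.ofReal_le_ofReal ?_)
      have : lam ≤ Lbar := by
        rw [hLbar]
        have : (0:ℝ) ≤ Vr / D ^ dH := by positivity
        linarith
      exact mul_le_mul_of_nonneg_right this hRdH.le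
    · calc μ (Metric.ball z R) ≤ μ Set.univ := measure_mono (Set.subset_univ _)
      _ = ENNReal.ofReal Vr := (ENNReal.ofReal_toReal hVfin).symm
      _ ≤ ENNReal.ofReal (Lbar * R ^ dH) := by
          refine ENNReal.ofReal_le_ofReal ?_
          have hDdH : (0:ℝ) < D ^ dH := Real.rpow_pos_of_pos hD _
          have h1 : D ^ dH ≤ R ^ dH := Real.rpow_le_rpow hD.le hRD.le hdH
          have h2 : Vr ≤ Vr / D ^ dH * R ^ dH := by
            rw [div_mul_eq_mul_div, le_div_iff₀ hDdH]
            exact mul_le_mul_of_nonneg_left h1 hVr0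
          have h3 : (0:ℝ) ≤ lam * R ^ dH := by positivity
          rw [hLbar]
          calc Vr ≤ Vr / D ^ dH * R ^ dH := h2
          _ ≤ (lam + Vr / D ^ dH) * R ^ dH := by nlinarith
          
  -- the constants
  set c₂ : ℝ := max 1 (Lbar * ((2*(D+1)/rmin) ^ dH) / (lam⁻¹ * (η/2) ^ dH)) with hc₂
  have hc₂1 : (1:ℝ) ≤ c₂ := le_max_left _ _
  have hc₂0 : (0:ℝ) < c₂ := lt_of_lt_of_le one_pos hc₂1
  refine ⟨rmin ^ s / c₂, by positivity, ?_⟩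
  intro δ p' hδ0 hδ1 hp'0 hp'1 hadm
  set θ : ℝ := δ ^ (1-p') / rmin with hθdef
  have hδ1p : 0 < δ ^ (1-p') := Real.rpow_pos_of_pos hδ0 _
  have hδ1p_le1 : δ ^ (1-p') ≤ 1 := Real.rpow_le_one hδ0.le hδ1.le (by linarith)
  have hθpos : 0 < θ := by positivity
  have hrminθ : rmin * θ = δ ^ (1-p') := by
    rw [hθdef, mul_div_cancel₀]
    exact ne_of_gt hrmin_pos
  obtain ⟨fuel, hfuel⟩ := exists_pow_lt_of_lt_one hθpos hrmax_lt1
  set Λ : Finset (List (Fin N)) := cut r fuel θ with hΛ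
  have hcard : θ ^ (-s) ≤ (Λ.card : ℝ) :=
    cut_card hN hr hrle_max hsum hs0 hθpos hfuel
  -- the optimal cover of FC
  set M : ℕ := coverN FC δ with hM
  obtain ⟨V, hVd, hVcov⟩ := coverN_spec hFCc hδ0
  -- lower bounds for wordProd on Λ
  have hρw_ge : ∀ w ∈ Λ, δ ^ (1-p') ≤ wordProd r w := by
    intro w hw
    have := cut_mem_ge hr hrmin_pos hrmin_le fuel θ w hθpos hw
    rwa [hrminθ, min_eq_left hδ1p_le1] at this
  have hρw_pos : ∀ w : List (Fin N), 0 < wordProd r w := wordProd_pos hr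
  -- C-copies inside FC
  have hsubFC : ∀ w : List (Fin N), wordMap S w '' C ⊆ FC := by
    refine wordMap_image_subset_FC (fun i => ?_)
      (by conv_rhs => rw [hFC]
          exact Set.subset_union_right)
    conv_rhs => rw [hFC]
    exact le_trans (Set.subset_iUnion (fun j => S j '' FC) i) Set.subset_union_left
  -- edist within cover sets
  have hVdist : ∀ (k : Fin M) (a b : X), a ∈ V k → b ∈ V k → dist a b ≤ δ := by
    intro k a b ha hb
    have h1 : edist a b ≤ ENNReal.ofReal δ := le_trans (EMetric.edist_le_diam_of_mem ha hb) (hVd k)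
    rw [edist_dist] at h1
    exact (ENNReal.ofReal_le_ofReal_iff hδ0.le).1 h1
  -- per-word lower count
  have hperw : ∀ w ∈ Λ, (coverN C (δ ^ p') : ℝ) ≤
      ((Finset.univ.filter (fun k : Fin M => (V k ∩ wordMap S w '' C).Nonempty)).card : ℝ) := by
    intro w hw
    have hδp'pos : 0 < δ ^ p' := Real.rpow_pos_of_pos hδ0 _
    refine Nat.cast_le.2 (coverN_le_card (T := fun k => wordMap S w ⁻¹' (V k)) ?_ ?_)
    · intro k _
      refine EMetric.diam_le ?_
      intro x hx y hy
      rw [edist_dist]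
      refine ENNReal.ofReal_le_ofReal ?_
      have heq := wordMap_dist hS w x y
      have hd : wordProd r w * dist x y ≤ δ := by
        rw [← heq]
        exact hVdist k _ _ hx hy
      have h2 : dist x y ≤ δ / wordProd r w := by
        rw [le_div_iff₀ (hρw_pos w), mul_comm]
        exact hd
      refine h2.trans ?_
      rw [div_le_iff₀ (hρw_pos w)]
      calc δ = δ ^ p' * δ ^ (1-p') := by
            rw [← Real.rpow_add hδ0]
            norm_num
      _ ≤ δ ^ p' * wordProd r w :=
            mul_le_mul_of_nonneg_left (hρw_ge w hw) hδp'pos.le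
    · intro x hx
      have hmem : wordMap S w x ∈ FC := hsubFC w ⟨x, hx, rfl⟩
      obtain ⟨k, hk⟩ := Set.mem_iUnion.1 (hVcov hmem)
      refine Set.mem_biUnion ?_ hk
      exact Finset.mem_filter.2 ⟨Finset.mem_univ _, ⟨wordMap S w x, hk, ⟨x, hx, rfl⟩⟩⟩
  -- per-cover-set upper count (multiplicity)
  have hperk : ∀ k : Fin M, ((Λ.filter (fun w => (V k ∩ wordMap S w '' C).Nonempty)).card : ℝ)
      ≤ c₂ := by
    intro k
    by_cases h1θ : 1 ≤ θ
    · -- Λ is a singleton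
      have : Λ = {[]} := by rw [hΛ, cut_of_one_le h1θ]
      calc ((Λ.filter (fun w => (V k ∩ wordMap S w '' C).Nonempty)).card : ℝ)
          ≤ (Λ.card : ℝ) := Nat.cast_le.2 (Finset.card_filter_le _ _)
      _ = 1 := by rw [this]; simp
      _ ≤ c₂ := hc₂1
    · set Wk := Λ.filter (fun w => (V k ∩ wordMap S w '' C).Nonempty) with hWk
      rcases Wk.eq_empty_or_nonempty with hWke | ⟨w₀, hw₀⟩
      · rw [hWke]
        simpa using hc₂0.le
      · -- a point of V k
        obtain ⟨zk, hzkV, -⟩ := (Finset.mem_filter.1 hw₀).2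
        have hRpos : 0 < 2*θ*(D+1) := by positivity
        -- all pieces are near V k
        have hθw_le : ∀ w ∈ Wk, wordProd r w ≤ θ := by
          intro w hw
          rcases cut_mem_le hr fuel θ w hθpos (hΛ ▸ (Finset.mem_filter.1 hw).1) with h | ⟨-, h⟩
          · exact h
          · exact absurd h h1θ
        have hδθ : δ ≤ θ := by
          have h1 : δ ≤ δ ^ (1-p') := by
            calc δ = δ ^ (1:ℝ) := (Real.rpow_one δ).symm
            _ ≤ δ ^ (1-p') := Real.rpow_le_rpow_of_exponent_ge hδ0 hδ1.le (by linarith)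
          calc δ ≤ δ ^ (1-p') := h1
          _ = rmin * θ := hrminθ.symm
          _ ≤ 1 * θ := mul_le_mul_of_nonneg_right hrmin_lt1.le hθpos.le
          _ = θ := one_mul θ
        have hsubball : ∀ w ∈ Wk, wordMap S w '' KU ⊆ Metric.ball zk (2*θ*(D+1)) := by
          intro w hw
          obtain ⟨q, hqV, c0, hc0C, hqeq⟩ := (Finset.mem_filter.1 hw).2
          rintro y ⟨x, hxKU, rfl⟩
          rw [Metric.mem_ball]
          have hd1 : dist (wordMap S w x) q ≤ θ * D := by
            rw [← hqeq, wordMap_dist hS]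
            refine mul_le_mul (hθw_le w hw) ?_ dist_nonneg hθpos.le
            exact Metric.dist_le_diam_of_mem isCompact_univ.isBounded
              (Set.mem_univ x) (Set.mem_univ c0)
          have hd2 : dist q zk ≤ δ := hVdist k q zk hqV hzkV
          calc dist (wordMap S w x) zk ≤ dist (wordMap S w x) q + dist q zk :=
                dist_triangle _ _ _
          _ ≤ θ * D + δ := add_le_add hd1 hd2
          _ ≤ θ * D + θ := by linarith [hδθ]
          _ = θ * (D+1) := by ring
          _ < 2*θ*(D+1) := by nlinarith [hθpos, hD]
        -- pieces are pairwise disjoint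
        have hdisjW : (↑Wk : Set (List (Fin N))).PairwiseDisjoint
            (fun w => wordMap S w '' KU) := by
          intro a ha b hb hab
          have haΛ : a ∈ cut r fuel θ := hΛ ▸ (Finset.mem_filter.1 ha).1
          have hbΛ : b ∈ cut r fuel θ := hΛ ▸ (Finset.mem_filter.1 hb).1
          have := cut_pairwise_disjoint hr hS hUsub hUdisj fuel θ a b haΛ hbΛ hab
          exact this.mono (Set.image_mono hKUU) (Set.image_mono hKUU)
        -- pieces are measurable
        have hcont : ∀ w : List (Fin N), Continuous (wordMap S w) := by
          intro w
          refine LipschitzWith.continuous (K := (wordProd r w).toNNReal) ?_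
          refine LipschitzWith.of_dist_le_mul fun x y => ?_
          rw [wordMap_dist hS, Real.coe_toNNReal _ (hρw_pos w).le]
        have hmeasW : ∀ w ∈ Wk, MeasurableSet (wordMap S w '' KU) := by
          intro w _
          exact ((hKUco.image (hcont w)).isClosed).measurableSet
        -- per-piece measure lower bound
        set a₀ : ℝ := (rmin*θ) ^ dH * (lam⁻¹ * (η/2) ^ dH) with ha₀
        have ha₀pos : 0 < a₀ := by
          have : (0:ℝ) < (rmin*θ) ^ dH := Real.rpow_pos_of_pos (by positivity) _
          positivity
        have hpermeas : ∀ w ∈ Wk, ENNReal.ofReal a₀ ≤ μ (wordMap S w '' KU) := by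
          intro w hw
          have himg := hausdorff_image_ge (hρw_pos w) hdH (wordMap_dist hS w) KU
          calc ENNReal.ofReal a₀
              = ENNReal.ofReal ((rmin*θ) ^ dH) * ENNReal.ofReal (lam⁻¹ * (η/2) ^ dH) := by
                rw [← ENNReal.ofReal_mul (by positivity)]
          _ ≤ ENNReal.ofReal ((wordProd r w) ^ dH) * μ KU := by
                refine mul_le_mul' (ENNReal.ofReal_le_ofReal ?_) hμKU
                refine Real.rpow_le_rpow (by positivity) ?_ hdH
                rw [hrminθ]
                exact hρw_ge w (hΛ ▸ (Finset.mem_filter.1 hw).1)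
          _ ≤ μ (wordMap S w '' KU) := himg
        -- counting
        have hsum : (Wk.card : ℕ) • ENNReal.ofReal a₀ ≤ ENNReal.ofReal (Lbar * (2*θ*(D+1)) ^ dH) := by
          calc (Wk.card : ℕ) • ENNReal.ofReal a₀
              ≤ ∑ w ∈ Wk, μ (wordMap S w '' KU) :=
                Finset.card_nsmul_le_sum Wk _ _ hpermeas
          _ = μ (⋃ w ∈ Wk, wordMap S w '' KU) := (measure_biUnion_finset hdisjW hmeasW).symm
          _ ≤ μ (Metric.ball zk (2*θ*(D+1))) := by
                refine measure_mono ?_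
                exact Set.iUnion₂_subset hsubball
          _ ≤ ENNReal.ofReal (Lbar * (2*θ*(D+1)) ^ dH) := hUB zk _ hRpos
        have hreal : (Wk.card : ℝ) * a₀ ≤ Lbar * (2*θ*(D+1)) ^ dH := by
          have h1 : ((Wk.card : ℕ) • ENNReal.ofReal a₀) = ENNReal.ofReal ((Wk.card : ℝ) * a₀) := by
            rw [nsmul_eq_mul, ← ENNReal.ofReal_natCast, ← ENNReal.ofReal_mul (Nat.cast_nonneg _)]
          rw [h1] at hsum
          exact (ENNReal.ofReal_le_ofReal_iff (by positivity)).1 hsum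
        -- algebra
        have hfrac : Lbar * (2*θ*(D+1)) ^ dH / a₀
            = Lbar * ((2*(D+1)/rmin) ^ dH) / (lam⁻¹ * (η/2) ^ dH) := by
          have h2' : (2*θ*(D+1)) ^ dH = (2*(D+1)/rmin) ^ dH * (rmin*θ) ^ dH := by
            rw [← Real.mul_rpow (by positivity) (by positivity)]
            congr 1
            field_simp
          have hB : ((rmin*θ):ℝ) ^ dH ≠ 0 := ne_of_gt (Real.rpow_pos_of_pos (by positivity) _)
          have hE : lam⁻¹ * (η/2) ^ dH ≠ 0 := by positivity
          rw [ha₀, h2']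
          field_simp
        calc (Wk.card : ℝ) ≤ Lbar * (2*θ*(D+1)) ^ dH / a₀ := by
              rw [le_div_iff₀ ha₀pos]
              exact hreal
        _ = Lbar * ((2*(D+1)/rmin) ^ dH) / (lam⁻¹ * (η/2) ^ dH) := hfrac
        _ ≤ c₂ := le_max_right _ _
  -- double counting
  have hdouble : (Λ.card : ℝ) * (coverN C (δ ^ p') : ℝ) ≤ (M : ℝ) * c₂ := by
    have hswap : ∑ w ∈ Λ, ∑ k : Fin M, (if (V k ∩ wordMap S w '' C).Nonempty then (1:ℝ) else 0)
        = ∑ k : Fin M, ∑ w ∈ Λ, (if (V k ∩ wordMap S w '' C).Nonempty then (1:ℝ) else 0) :=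
      Finset.sum_comm
    have hinner1 : ∀ w ∈ Λ, ∑ k : Fin M, (if (V k ∩ wordMap S w '' C).Nonempty then (1:ℝ) else 0)
        = ((Finset.univ.filter (fun k : Fin M => (V k ∩ wordMap S w '' C).Nonempty)).card : ℝ) := by
      intro w _
      rw [Finset.sum_boole]
    have hinner2 : ∀ k : Fin M, ∑ w ∈ Λ, (if (V k ∩ wordMap S w '' C).Nonempty then (1:ℝ) else 0)
        = ((Λ.filter (fun w => (V k ∩ wordMap S w '' C).Nonempty)).card : ℝ) := by
      intro k
      rw [Finset.sum_boole]
    calc (Λ.card : ℝ) * (coverN C (δ ^ p') : ℝ)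
        = ∑ _w ∈ Λ, (coverN C (δ ^ p') : ℝ) := by rw [Finset.sum_const, nsmul_eq_mul]
    _ ≤ ∑ w ∈ Λ, ∑ k : Fin M, (if (V k ∩ wordMap S w '' C).Nonempty then (1:ℝ) else 0) := by
        refine Finset.sum_le_sum fun w hw => ?_
        rw [hinner1 w hw]
        exact hperw w hw
    _ = ∑ k : Fin M, ∑ w ∈ Λ, (if (V k ∩ wordMap S w '' C).Nonempty then (1:ℝ) else 0) := hswap
    _ ≤ ∑ _k : Fin M, c₂ := by
        refine Finset.sum_le_sum fun k _ => ?_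
        rw [hinner2 k]
        exact hperk k
    _ = (M : ℝ) * c₂ := by rw [Finset.sum_const, nsmul_eq_mul]; simp
  -- conclude
  have hθs : θ ^ (-s) = rmin ^ s * δ ^ (-((1-p')*s)) := by
    rw [hθdef, Real.div_rpow hδ1p.le hrmin_pos.le, Real.rpow_neg hrmin_pos.le]
    have he : (δ ^ (1-p')) ^ (-s) = δ ^ (-((1-p')*s)) := by
      rw [← Real.rpow_mul hδ0.le]
      ring_nf
    rw [div_eq_mul_inv, inv_inv, he]
    ring
  have hkey : rmin ^ s * δ ^ (-((1-p')*s + p'*t)) ≤ (Λ.card : ℝ) * (coverN C (δ ^ p') : ℝ) := by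
    have hsplit : δ ^ (-((1-p')*s + p'*t)) = δ ^ (-((1-p')*s)) * δ ^ (-(p'*t)) := by
      rw [← Real.rpow_add hδ0]
      ring_nf
    calc rmin ^ s * δ ^ (-((1-p')*s + p'*t))
        = (rmin ^ s * δ ^ (-((1-p')*s))) * δ ^ (-(p'*t)) := by rw [hsplit]; ring
    _ = θ ^ (-s) * δ ^ (-(p'*t)) := by rw [hθs]
    _ ≤ (Λ.card : ℝ) * (coverN C (δ ^ p') : ℝ) := by
        refine mul_le_mul hcard hadm (Real.rpow_pos_of_pos hδ0 _).le (Nat.cast_nonneg _)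
  calc rmin ^ s / c₂ * δ ^ (-((1-p')*s + p'*t))
      = (rmin ^ s * δ ^ (-((1-p')*s + p'*t))) / c₂ := by ring
  _ ≤ ((Λ.card : ℝ) * (coverN C (δ ^ p') : ℝ)) / c₂ := by
      gcongr
  _ ≤ (M : ℝ) := by
      rw [div_le_iff₀ hc₂0]
      exact hdouble

end MainCount

set_option maxHeartbeats 1000000 in
theorem lower_box_dim_inhomogeneous_lower_bound
    {X : Type*} [MetricSpace X] [CompactSpace X] {N : ℕ} (hN : 0 < N)
    (S : Fin N → X → X) (r : Fin N → ℝ)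
    (hr : ∀ i, r i ∈ Set.Ioo (0 : ℝ) 1)
    (hS : ∀ i x y, dist (S i x) (S i y) = r i * dist x y)
    (s : ℝ) (hs : ∑ i, r i ^ s = 1)
    [MeasurableSpace X] [BorelSpace X]
    (dH lam : ℝ) (hdH : 0 ≤ dH) (hlam : 0 < lam)
    (hdimX : dimH (Set.univ : Set X) = ENNReal.ofReal dH)
    (hreg : ∀ (x : X) (ρ : ℝ), 0 < ρ → ρ ≤ Metric.diam (Set.univ : Set X) →
      ENNReal.ofReal (lam⁻¹ * ρ ^ dH) ≤ μH[dH] (Metric.ball x ρ) ∧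
      μH[dH] (Metric.ball x ρ) ≤ ENNReal.ofReal (lam * ρ ^ dH))
    (C : Set X) (hC : IsCompact C) (hCne : C.Nonempty)
    (F0 : Set X) (hF0c : IsCompact F0) (hF0ne : F0.Nonempty)
    (hF0 : F0 = ⋃ i, S i '' F0)
    (FC : Set X) (hFCc : IsCompact FC) (hFCne : FC.Nonempty)
    (hFC : FC = (⋃ i, S i '' FC) ∪ C)
    (hCOSC : ∃ U : Set X, IsOpen U ∧ U.Nonempty ∧ (F0 ∩ U).Nonempty ∧
      (⋃ i, S i '' U) ⊆ U ∧ (Pairwise fun i j => Disjoint (S i '' U) (S j '' U)) ∧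
      C ⊆ closure U)
 :
    ∀ t : ℝ, 0 ≤ t → creT C t * t + (1 - creT C t) * s ≤ lbDim FC := by
  classical
  obtain ⟨U, hUopen, hUne, hFU, hUsub, hUdisjP, hCU⟩ := hCOSC
  intro t ht
  have hXne : Nonempty X := ⟨hCne.some⟩
  haveI : (𝓝[>] (0:ℝ)).NeBot := nhdsGT_neBot 0
  have hev_pos : ∀ᶠ δ in 𝓝[>] (0:ℝ), 0 < δ := eventually_mem_nhdsWithin
  -- s is nonnegative
  have hs0 : 0 ≤ s := by
    by_contra hcon
    push_neg at hcon
    have hgt : ∀ i, 1 < r i ^ s := fun i =>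
      (Real.one_lt_rpow_iff_of_pos (hr i).1).2 (Or.inr ⟨(hr i).2, hcon⟩)
    have h1 : (1:ℝ) < ∑ i, r i ^ s := by
      calc (1:ℝ) < r ⟨0, hN⟩ ^ s := hgt _
      _ ≤ ∑ i, r i ^ s := Finset.single_le_sum
          (f := fun i => r i ^ s) (fun i _ => (Real.rpow_pos_of_pos (hr i).1 s).le)
          (Finset.mem_univ _)
    linarith [hs]
  -- basic properties of the cre sets
  have hP0 : ∀ δ : ℝ, 0 < δ →
      (0:ℝ) ∈ {p : ℝ | 0 ≤ p ∧ p ≤ 1 ∧ δ ^ (-(p * t)) ≤ (coverN C (δ ^ p) : ℝ)} := by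
    intro δ hδ
    refine ⟨le_rfl, zero_le_one, ?_⟩
    simp only [zero_mul, neg_zero, Real.rpow_zero]
    exact_mod_cast one_le_coverN hC hCne one_pos
  have hbddS : ∀ δ : ℝ,
      BddAbove {p : ℝ | 0 ≤ p ∧ p ≤ 1 ∧ δ ^ (-(p * t)) ≤ (coverN C (δ ^ p) : ℝ)} :=
    fun δ => ⟨1, fun p hp => hp.2.1⟩
  have hcre_nonneg : ∀ δ : ℝ, 0 < δ → 0 ≤ cre C t δ :=
    fun δ hδ => le_csSup (hbddS δ) (hP0 δ hδ)
  have hcre_le1 : ∀ δ : ℝ, 0 < δ → cre C t δ ≤ 1 :=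
    fun δ hδ => csSup_le ⟨0, hP0 δ hδ⟩ (fun p hp => hp.2.1)
  have hcreT0 : 0 ≤ creT C t := by
    refine le_liminf_aux (B := 1) ?_ ?_ <;> filter_upwards [hev_pos] with δ hδ
    · exact hcre_le1 δ hδ
    · exact hcre_nonneg δ hδ
  by_cases hsing : Subsingleton X
  · -- degenerate case: X has at most one point
    have hcov1 : ∀ (A : Set X), A.Nonempty → ∀ ρ : ℝ, coverN A ρ = 1 := by
      intro A hA ρ
      have hdiam0 : ∀ i : Fin 1, EMetric.diam ((fun _ => Set.univ : Fin 1 → Set X) i)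
          ≤ ENNReal.ofReal ρ := by
        intro i
        exact (EMetric.diam_subsingleton (Set.subsingleton_univ.anti (Set.subset_univ _))).trans_le (zero_le')
      have hle : coverN A ρ ≤ 1 :=
        coverN_le ⟨fun _ => Set.univ, hdiam0, fun x _ => Set.mem_iUnion.2 ⟨0, Set.mem_univ x⟩⟩
      have hge : 1 ≤ coverN A ρ := by
        rw [Nat.one_le_iff_ne_zero]
        intro h0
        rcases Nat.sInf_eq_zero.1 h0 with h | h
        · obtain ⟨V, -, hcov⟩ := h
          obtain ⟨x, hx⟩ := hA
          obtain ⟨i, -⟩ := Set.mem_iUnion.1 (hcov hx)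
          exact i.elim0
        · have h1 : (1:ℕ) ∈ {n : ℕ | ∃ V : Fin n → Set X,
              (∀ i, EMetric.diam (V i) ≤ ENNReal.ofReal ρ) ∧ A ⊆ ⋃ i, V i} :=
            ⟨fun _ => Set.univ, hdiam0, fun x _ => Set.mem_iUnion.2 ⟨0, Set.mem_univ x⟩⟩
          rw [h] at h1
          exact h1
      omega
    have hlb0 : 0 ≤ lbDim FC := by
      refine le_liminf_aux (B := 0) ?_ ?_ <;> filter_upwards [hev_pos] with δ hδ <;>
        rw [hcov1 FC hFCne δ] <;> simp
    rcases Nat.lt_or_ge N 2 with hN2 | hN2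
    · -- N = 1, so s = 0
      have hN1 : N = 1 := by omega
      subst hN1
      have hs_eq : s = 0 := by
        have h1 : r 0 ^ s = 1 := by rw [← Fin.sum_univ_one (fun i => r i ^ s)]; exact hs
        have h2 : s * Real.log (r 0) = 0 := by
          rw [← Real.log_rpow (hr 0).1, h1, Real.log_one]
        have h3 : Real.log (r 0) ≠ 0 :=
          ne_of_lt (Real.log_neg (hr 0).1 (hr 0).2)
        exact (mul_eq_zero.1 h2).resolve_right h3
      rw [hs_eq, mul_zero, add_zero]
      rcases eq_or_lt_of_le ht with ht0 | ht0
      · rw [← ht0, mul_zero]; exact hlb0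
      · -- t > 0 : creT = 0
        have hcre0 : ∀ δ : ℝ, 0 < δ → δ < 1 → cre C t δ ≤ 0 := by
          intro δ hδ0 hδ1
          refine csSup_le ⟨0, hP0 δ hδ0⟩ (fun p hp => ?_)
          obtain ⟨hp0, hp1, hple⟩ := hp
          rw [hcov1 C hCne (δ ^ p), Nat.cast_one, ← Real.rpow_zero δ] at hple
          have := (Real.rpow_le_rpow_left_iff_of_base_lt_one hδ0 hδ1).1 hple
          nlinarith
        have hcreT_le : creT C t ≤ 0 := by
          have hbb : Filter.IsBoundedUnder (· ≥ ·) (𝓝[>] (0:ℝ)) (fun δ => cre C t δ) := by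
            refine ⟨0, Filter.eventually_map.2 ?_⟩
            filter_upwards [hev_pos] with δ hδ
            exact hcre_nonneg δ hδ
          refine liminf_le_of_frequently_le ?_ hbb
          have : ∀ᶠ δ in 𝓝[>] (0:ℝ), cre C t δ ≤ 0 := by
            filter_upwards [Ioo_mem_nhdsGT_of_mem (Set.mem_Ico.2 ⟨le_rfl, one_pos⟩)] with δ hδ
            exact hcre0 δ hδ.1 hδ.2
          exact this.frequently
        have : creT C t = 0 := le_antisymm hcreT_le hcreT0
        rw [this, zero_mul]
        exact hlb0
    · -- N ≥ 2 : impossible in a subsingleton space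
      exfalso
      have hne01 : (⟨0, by omega⟩ : Fin N) ≠ ⟨1, by omega⟩ := by
        simp [Fin.ext_iff]
      have hd := hUdisjP hne01
      obtain ⟨u, hu⟩ := hUne
      have h0 : S ⟨0, by omega⟩ u ∈ S (⟨0, by omega⟩ : Fin N) '' U := ⟨u, hu, rfl⟩
      have h1 : S ⟨1, by omega⟩ u ∈ S (⟨1, by omega⟩ : Fin N) '' U := ⟨u, hu, rfl⟩
      have heq : S (⟨0, by omega⟩ : Fin N) u = S ⟨1, by omega⟩ u := Subsingleton.elim _ _
      exact Set.disjoint_left.1 hd h0 (heq ▸ h1)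
  · -- main case : X has at least two points
    have hD : 0 < Metric.diam (Set.univ : Set X) := by
      rw [not_subsingleton_iff_nontrivial] at hsing
      obtain ⟨x, y, hxy⟩ := hsing
      exact lt_of_lt_of_le (dist_pos.2 hxy)
        (Metric.dist_le_diam_of_mem isCompact_univ.isBounded (Set.mem_univ x) (Set.mem_univ y))
    obtain ⟨c, hc0, hmain⟩ := main_count hN S r hr hS hs hs0 dH lam hdH hlam hreg hD
      C FC U hC hCne hFCc hFC hUopen hUne hUsub hUdisjP t ht
    obtain ⟨CX, hCX0, hCX⟩ := coverN_univ_le hdH hlam hD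
      (fun x ρ h1 h2 => (hreg x ρ h1 h2).1) (fun x ρ h1 h2 => (hreg x ρ h1 h2).2)
    -- global upper bound on the box-count quotient
    have hfB : ∀ᶠ δ in 𝓝[>] (0:ℝ),
        Real.log (coverN FC δ) / (-Real.log δ) ≤ dH + |Real.log CX| / Real.log 2 := by
      have hub : (0:ℝ) < min (Metric.diam (Set.univ : Set X)) (1/2) := by
        refine lt_min hD (by norm_num)
      filter_upwards [Ioo_mem_nhdsGT_of_mem (Set.mem_Ico.2 ⟨le_rfl, hub⟩)] with δ hδ
      obtain ⟨hδ0, hδlt⟩ := hδ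
      have hδD : δ ≤ Metric.diam (Set.univ : Set X) := le_trans hδlt.le (min_le_left _ _)
      have hδhalf : δ ≤ 1/2 := le_trans hδlt.le (min_le_right _ _)
      have hδ1 : δ < 1 := lt_of_le_of_lt hδhalf (by norm_num)
      have hlogδpos : 0 < -Real.log δ := by
        have := Real.log_neg hδ0 hδ1
        linarith
      have hcovle : (coverN FC δ : ℝ) ≤ CX * δ ^ (-dH) := by
        refine le_trans ?_ (hCX δ hδ0 hδD)
        exact_mod_cast coverN_mono_set isCompact_univ hδ0 (Set.subset_univ FC)
      have hcov1' : (1:ℝ) ≤ (coverN FC δ : ℝ) := by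
        exact_mod_cast one_le_coverN hFCc hFCne hδ0
      have hlog : Real.log (coverN FC δ) ≤ Real.log CX + dH * (-Real.log δ) := by
        calc Real.log (coverN FC δ) ≤ Real.log (CX * δ ^ (-dH)) :=
              Real.log_le_log (by linarith) hcovle
        _ = Real.log CX + (-dH) * Real.log δ := by
              rw [Real.log_mul (ne_of_gt hCX0)
                (ne_of_gt (Real.rpow_pos_of_pos hδ0 _)), Real.log_rpow hδ0]
        _ = Real.log CX + dH * (-Real.log δ) := by ring
      have hlog2δ : Real.log 2 ≤ -Real.log δ := by
        have h1 : Real.log δ ≤ Real.log (1/2) := Real.log_le_log hδ0 hδhalf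
        rw [one_div, Real.log_inv] at h1
        linarith
      have hlog2pos : (0:ℝ) < Real.log 2 := Real.log_pos (by norm_num)
      calc Real.log (coverN FC δ) / (-Real.log δ)
          ≤ (Real.log CX + dH * (-Real.log δ)) / (-Real.log δ) := by gcongr
      _ = Real.log CX / (-Real.log δ) + dH := by
          have hδne : Real.log δ ≠ 0 := ne_of_lt (by linarith)
          field_simp
          ring
      _ ≤ |Real.log CX| / Real.log 2 + dH := by
          refine add_le_add_left ?_ dH
          calc Real.log CX / (-Real.log δ) ≤ |Real.log CX| / (-Real.log δ) := by
                gcongr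
                exact le_abs_self _
          _ ≤ |Real.log CX| / Real.log 2 := by
                gcongr (|Real.log CX| / ?_)
      _ = dH + |Real.log CX| / Real.log 2 := by ring
    -- the key lower-bound principle
    have hkey : ∀ b : ℝ, (∀ᶠ δ in 𝓝[>] (0:ℝ), δ < 1 → ∃ p', 0 ≤ p' ∧ p' ≤ 1 ∧
        δ ^ (-(p' * t)) ≤ (coverN C (δ ^ p') : ℝ) ∧ b ≤ (1-p')*s + p'*t) → b ≤ lbDim FC := by
      intro b hb
      refine le_of_forall_pos_le_add ?_
      intro ε hε
      rw [← sub_le_iff_le_add]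
      refine le_liminf_aux hfB ?_
      set δ₀ : ℝ := min (1/2) (Real.exp (-(|Real.log c| / ε + 1))) with hδ₀
      have hδ₀pos : 0 < δ₀ := lt_min (by norm_num) (Real.exp_pos _)
      filter_upwards [hb, Ioo_mem_nhdsGT_of_mem (Set.mem_Ico.2 ⟨le_rfl, hδ₀pos⟩)]
        with δ hbδ hδmem
      obtain ⟨hδ0, hδlt⟩ := hδmem
      have hδ1 : δ < 1 := lt_of_lt_of_le hδlt (le_trans (min_le_left _ _) (by norm_num))
      obtain ⟨p', hp0, hp1, hadm, hbe⟩ := hbδ hδ1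
      have hlogδpos : 0 < -Real.log δ := by
        have := Real.log_neg hδ0 hδ1
        linarith
      have hεbound : |Real.log c| / (-Real.log δ) ≤ ε := by
        have h1 : Real.log δ < -(|Real.log c| / ε + 1) := by
          calc Real.log δ < Real.log δ₀ := Real.log_lt_log hδ0 hδlt
          _ ≤ Real.log (Real.exp (-(|Real.log c| / ε + 1))) := by
              refine Real.log_le_log hδ₀pos (min_le_right _ _)
          _ = -(|Real.log c| / ε + 1) := Real.log_exp _
        have h2 : |Real.log c| / ε + 1 ≤ -Real.log δ := by linarith
        have h3 : (0:ℝ) < |Real.log c| / ε + 1 := by positivity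
        calc |Real.log c| / (-Real.log δ) ≤ |Real.log c| / (|Real.log c| / ε + 1) := by
              gcongr
        _ ≤ ε := by
              rw [div_le_iff₀ h3]
              have : |Real.log c| ≤ ε * (|Real.log c| / ε) := by
                rw [mul_div_cancel₀ _ (ne_of_gt hε)]
              nlinarith [abs_nonneg (Real.log c), hε]
      have hMlb := hmain δ p' hδ0 hδ1 hp0 hp1 hadm
      have hcovpos : (0:ℝ) < (coverN FC δ : ℝ) :=
        lt_of_lt_of_le (by positivity) hMlb
      have hlogM : Real.log c + ((1-p')*s + p'*t) * (-Real.log δ) ≤ Real.log (coverN FC δ) := by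
        calc Real.log c + ((1-p')*s + p'*t) * (-Real.log δ)
            = Real.log (c * δ ^ (-((1-p')*s + p'*t))) := by
              rw [Real.log_mul (ne_of_gt hc0)
                (ne_of_gt (Real.rpow_pos_of_pos hδ0 _)), Real.log_rpow hδ0]
              ring
        _ ≤ Real.log (coverN FC δ) := Real.log_le_log (by positivity) hMlb
      calc b - ε ≤ ((1-p')*s + p'*t) - |Real.log c| / (-Real.log δ) := by
            have : -(|Real.log c|) ≤ Real.log c := neg_abs_le _
            linarith [hbe, hεbound]
      _ ≤ ((1-p')*s + p'*t) + Real.log c / (-Real.log δ) := by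
            have h4 : -(|Real.log c|) / (-Real.log δ) ≤ Real.log c / (-Real.log δ) := by
              gcongr
              exact neg_abs_le _
            have h5 : -(|Real.log c|) / (-Real.log δ) = -(|Real.log c| / (-Real.log δ)) := by
              ring
            linarith [h4, h5 ▸ h4]
      _ = (Real.log c + ((1-p')*s + p'*t) * (-Real.log δ)) / (-Real.log δ) := by
            have hδne : Real.log δ ≠ 0 := ne_of_lt (by linarith)
            field_simp
            ring
      _ ≤ Real.log (coverN FC δ) / (-Real.log δ) := by gcongr
    -- finish, splitting on whether t ≥ s
    rcases le_or_gt s t with hts | hts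
    · refine le_of_forall_pos_le_add ?_
      intro ε hε
      have htspos : (0:ℝ) < t - s + 1 := by linarith
      set q : ℝ := creT C t - ε / (t - s + 1) with hqdef
      have hq_lt : q < creT C t := by
        have h7 : 0 < ε / (t - s + 1) := div_pos hε htspos
        rw [hqdef]
        linarith
      have hbdd : Filter.IsBoundedUnder (· ≥ ·) (𝓝[>] (0:ℝ)) (cre C t) := by
        refine ⟨0, Filter.eventually_map.2 ?_⟩
        filter_upwards [hev_pos] with δ hδ
        exact hcre_nonneg δ hδ
      have hev_q : ∀ᶠ δ in 𝓝[>] (0:ℝ), q < cre C t δ :=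
        eventually_lt_of_lt_liminf hq_lt hbdd
      set q' : ℝ := max q 0 with hq'
      have hb := hkey ((1-q')*s + q'*t) ?_
      · -- conclude from hb
        have hq'le : creT C t - q' ≤ ε / (t - s + 1) := by
          have h8 : q ≤ q' := le_max_left _ _
          have h9 : creT C t - q = ε / (t - s + 1) := by rw [hqdef]; ring
          exact le_trans (sub_le_sub_left h8 (creT C t)) (le_of_eq h9)
        have h6 : (creT C t - q') * (t - s) ≤ ε := by
          calc (creT C t - q') * (t - s) ≤ (ε / (t - s + 1)) * (t - s) :=
                mul_le_mul_of_nonneg_right hq'le (by linarith)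
          _ ≤ ε := by
                rw [div_mul_eq_mul_div, div_le_iff₀ htspos]
                nlinarith
        nlinarith [hb, h6]
      · filter_upwards [hev_q, hev_pos] with δ hq hδ0 _
        have hq2 : q < sSup {p : ℝ | 0 ≤ p ∧ p ≤ 1 ∧
            δ ^ (-(p * t)) ≤ (coverN C (δ ^ p) : ℝ)} := hq
        obtain ⟨p', hp'S, hqp'⟩ := exists_lt_of_lt_csSup ⟨0, hP0 δ hδ0⟩ hq2
        obtain ⟨hp0, hp1, hadm⟩ := hp'S
        refine ⟨p', hp0, hp1, hadm, ?_⟩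
        have hp'q' : q' ≤ p' := max_le hqp'.le hp0
        nlinarith [hp'q', hts]
    · have hlb_s : s ≤ lbDim FC := by
        refine hkey s ?_
        filter_upwards [hev_pos] with δ hδ0 _
        exact ⟨0, le_rfl, zero_le_one, (hP0 δ hδ0).2.2, by norm_num⟩
      nlinarith [hcreT0, hts, hlb_s]
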